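/- Let A be a 5-dimensional non-split nilpotent left Leibniz algebra over ℂ with dim A² = 3 and dim Leib(A) = 1. Then dim A³ equals 1 or 2. -/

import Mathlib

/-- The left Leibniz identity for a bilinear bracket:
`[a,[b,c]] = [[a,b],c] + [b,[a,c]]`. -/
def IsLeibnizBracket {K A : Type*} [CommRing K] [AddCommGroup A] [Module K A]
    (br : A →ₗ[K] A →ₗ[K] A) : Prop :=
  ∀ a b c : A, br a (br b c) = br (br a b) c + br b (br a c)

/-- The span of all brackets `[s,t]` with `s ∈ S`, `t ∈ T`. -/
def bracketSpan {K A : Type*} [CommRing K] [AddCommGroup A] [Module K A]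
    (br : A →ₗ[K] A →ₗ[K] A) (S T : Submodule K A) : Submodule K A :=
  Submodule.span K {x | ∃ s ∈ S, ∃ t ∈ T, br s t = x}

/-- Lower central series: `lcs br n = A^(n+1)`, i.e. `lcs br 0 = A¹ = A` and
`lcs br (n+1) = [A, lcs br n]`. -/
def lcs {K A : Type*} [CommRing K] [AddCommGroup A] [Module K A]
    (br : A →ₗ[K] A →ₗ[K] A) : ℕ → Submodule K A
  | 0 => ⊤
  | n + 1 => bracketSpan br ⊤ (lcs br n)

/-- `Leib(A)`: the span of all squares `[a,a]`. -/
def leibIdeal {K A : Type*} [CommRing K] [AddCommGroup A] [Module K A]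
    (br : A →ₗ[K] A →ₗ[K] A) : Submodule K A :=
  Submodule.span K {x | ∃ a : A, br a a = x}

/-- The center `Z(A) = {x : [a,x] = 0 = [x,a] for all a}`. -/
def leibnizCenter {K A : Type*} [CommRing K] [AddCommGroup A] [Module K A]
    (br : A →ₗ[K] A →ₗ[K] A) : Submodule K A where
  carrier := {x | ∀ a : A, br a x = 0 ∧ br x a = 0}
  add_mem' := by
    intro x y hx hy a
    constructor <;>
      simp [map_add, LinearMap.add_apply, (hx a).1, (hx a).2, (hy a).1, (hy a).2]
  zero_mem' := by
    intro a
    constructor <;> simp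
  smul_mem' := by
    intro c x hx a
    constructor <;>
      simp [map_smul, LinearMap.smul_apply, (hx a).1, (hx a).2]

/-- Two-sided ideal of a Leibniz algebra. -/
def IsLeibnizIdeal {K A : Type*} [CommRing K] [AddCommGroup A] [Module K A]
    (br : A →ₗ[K] A →ₗ[K] A) (I : Submodule K A) : Prop :=
  ∀ a : A, ∀ x ∈ I, br a x ∈ I ∧ br x a ∈ I

/-- If `A` is a 5-dimensional non-split nilpotent left Leibniz algebra over
`ℂ` with `dim A² = 3` and `dim Leib(A) = 1`, then `dim A³` is `1` or `2`. -/
theorem dim_third_lcs_eq_one_or_two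
    {A : Type*} [AddCommGroup A] [Module ℂ A] [FiniteDimensional ℂ A]
    (br : A →ₗ[ℂ] A →ₗ[ℂ] A) (hbr : IsLeibnizBracket br)
    (hns : ¬ ∃ I J : Submodule ℂ A, IsLeibnizIdeal br I ∧ IsLeibnizIdeal br J ∧
      I ≠ ⊥ ∧ J ≠ ⊥ ∧ IsCompl I J)
    (hnil : ∃ m : ℕ, lcs br m = ⊥)
    (hdim : Module.finrank ℂ A = 5)
    (hA2 : Module.finrank ℂ ↥(lcs br 1) = 3)
    (hleib : Module.finrank ℂ ↥(leibIdeal br) = 1) :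
    Module.finrank ℂ ↥(lcs br 2) = 1 ∨ Module.finrank ℂ ↥(lcs br 2) = 2 := by
  classical
  -- A³ ⊆ A²
  have hle : lcs br 2 ≤ lcs br 1 := by
    refine Submodule.span_le.2 ?_
    rintro z ⟨s, -, t, -, rfl⟩
    exact Submodule.subset_span ⟨s, trivial, t, trivial, rfl⟩
  -- A² ≠ ⊥
  have hL1ne : lcs br 1 ≠ ⊥ := by
    intro h
    rw [h, finrank_bot] at hA2
    exact absurd hA2 (by norm_num)
  -- A³ ≠ A² by nilpotency
  have hne : lcs br 2 ≠ lcs br 1 := by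
    intro heq
    have hall : ∀ n : ℕ, lcs br (n + 1) = lcs br 1 := by
      intro n
      induction n with
      | zero => rfl
      | succ n ih =>
        show bracketSpan br ⊤ (lcs br (n + 1)) = lcs br 1
        rw [ih]
        exact heq
    obtain ⟨m, hm⟩ := hnil
    cases m with
    | zero =>
      have : Module.finrank ℂ A = 0 := by
        have h0 : (⊤ : Submodule ℂ A) = ⊥ := hm
        rw [← finrank_top ℂ A, h0, finrank_bot]
      omega
    | succ n => exact hL1ne ((hall n).symm.trans hm)
  have hlt : lcs br 2 < lcs br 1 := lt_of_le_of_ne hle hne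
  have h2lt : Module.finrank ℂ ↥(lcs br 2) < 3 := by
    have := Submodule.finrank_lt_finrank_of_lt hlt
    omega
  -- A³ ≠ ⊥
  have hne0 : lcs br 2 ≠ ⊥ := by
    intro hbot
    -- left multiplication kills A²
    have h0 : ∀ (a x : A), x ∈ lcs br 1 → br a x = 0 := by
      intro a x hx
      have hmem : br a x ∈ lcs br 2 := Submodule.subset_span ⟨a, trivial, x, hx, rfl⟩
      rw [hbot] at hmem
      simpa using hmem
    have hgen : ∀ s t : A, br s t ∈ lcs br 1 := fun s t =>
      Submodule.subset_span ⟨s, trivial, t, trivial, rfl⟩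
    -- right multiplication kills A²
    have hR : ∀ x ∈ lcs br 1, ∀ a : A, br x a = 0 := by
      intro x hx
      refine Submodule.span_induction ?_ ?_ ?_ ?_ hx
      · rintro z ⟨s, -, t, -, rfl⟩ a
        have hid := hbr s t a
        rw [h0 s (br t a) (hgen t a), h0 t (br s a) (hgen s a), add_zero] at hid
        exact hid.symm
      · intro a; simp
      · intro z w _ _ hz hw a
        simp [LinearMap.add_apply, hz a, hw a]
      · intro c z _ hz a
        simp [LinearMap.smul_apply, hz a]
    -- dimension of quotient A/A² is 2
    have hq : Module.finrank ℂ (A ⧸ lcs br 1) = 2 := by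
      have := Submodule.finrank_quotient_add_finrank (lcs br 1)
      omega
    obtain ⟨bb⟩ : Nonempty (Module.Basis (Fin 2) ℂ (A ⧸ lcs br 1)) :=
      ⟨Module.finBasisOfFinrankEq ℂ _ hq⟩
    obtain ⟨x, hxq⟩ := Submodule.Quotient.mk_surjective (lcs br 1) (bb 0)
    obtain ⟨y, hyq⟩ := Submodule.Quotient.mk_surjective (lcs br 1) (bb 1)
    have hdec : ∀ a : A, ∃ s t : ℂ, a - s • x - t • y ∈ lcs br 1 := by
      intro a
      refine ⟨bb.repr (Submodule.Quotient.mk a) 0, bb.repr (Submodule.Quotient.mk a) 1, ?_⟩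
      have hsum := bb.sum_repr (Submodule.Quotient.mk a)
      rw [Fin.sum_univ_two] at hsum
      rw [← Submodule.Quotient.mk_eq_zero]
      rw [Submodule.Quotient.mk_sub, Submodule.Quotient.mk_sub,
        Submodule.Quotient.mk_smul, Submodule.Quotient.mk_smul, hxq, hyq, sub_sub,
        sub_eq_zero]
      exact hsum.symm
    set d : A := br x y - br y x with hd
    set T : Submodule ℂ A := leibIdeal br ⊔ Submodule.span ℂ {d} with hT
    have hsq : ∀ z : A, br z z ∈ T := fun z =>
      Submodule.mem_sup_left (Submodule.subset_span ⟨z, rfl⟩)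
    have hsum2 : ∀ z w : A, br z w + br w z ∈ leibIdeal br := by
      intro z w
      have h1 : br (z + w) (z + w) - br z z - br w w = br z w + br w z := by
        simp only [map_add, LinearMap.add_apply]
        abel
      rw [← h1]
      exact sub_mem (sub_mem (Submodule.subset_span ⟨_, rfl⟩)
        (Submodule.subset_span ⟨_, rfl⟩)) (Submodule.subset_span ⟨_, rfl⟩)
    have hxyT : br x y ∈ T := by
      have heq : br x y = (2⁻¹ : ℂ) • (br x y + br y x) + (2⁻¹ : ℂ) • d := by
        rw [hd]
        module
      rw [heq]
      exact add_mem (Submodule.mem_sup_left (Submodule.smul_mem _ _ (hsum2 x y)))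
        (Submodule.mem_sup_right (Submodule.smul_mem _ _ (Submodule.mem_span_singleton_self d)))
    have hyxT : br y x ∈ T := by
      have heq : br y x = (2⁻¹ : ℂ) • (br x y + br y x) + (-(2⁻¹ : ℂ)) • d := by
        rw [hd]
        module
      rw [heq]
      exact add_mem (Submodule.mem_sup_left (Submodule.smul_mem _ _ (hsum2 x y)))
        (Submodule.mem_sup_right (Submodule.smul_mem _ _ (Submodule.mem_span_singleton_self d)))
    have hbrT : ∀ a b : A, br a b ∈ T := by
      intro a b
      obtain ⟨s, t, ha⟩ := hdec a
      obtain ⟨s', t', hb⟩ := hdec b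
      have ea : a = (a - s • x - t • y) + s • x + t • y := by abel
      have hab : br a b = s • br x b + t • br y b := by
        conv_lhs => rw [ea]
        simp only [map_add, map_smul, LinearMap.add_apply, LinearMap.smul_apply,
          hR _ ha b, zero_add]
      have eb : b = (b - s' • x - t' • y) + s' • x + t' • y := by abel
      have hxb : br x b = s' • br x x + t' • br x y := by
        conv_lhs => rw [eb]
        simp only [map_add, map_smul, h0 x _ hb, zero_add]
      have hyb : br y b = s' • br y x + t' • br y y := by
        conv_lhs => rw [eb]
        simp only [map_add, map_smul, h0 y _ hb, zero_add]
      rw [hab, hxb, hyb]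
      exact add_mem
        (Submodule.smul_mem _ _ (add_mem (Submodule.smul_mem _ _ (hsq x))
          (Submodule.smul_mem _ _ hxyT)))
        (Submodule.smul_mem _ _ (add_mem (Submodule.smul_mem _ _ hyxT)
          (Submodule.smul_mem _ _ (hsq y))))
    have hL1T : lcs br 1 ≤ T := by
      refine Submodule.span_le.2 ?_
      rintro z ⟨s, -, t, -, rfl⟩
      exact hbrT s t
    have hdspan : Module.finrank ℂ ↥(Submodule.span ℂ {d}) ≤ 1 := by
      by_cases hd0 : d = 0
      · rw [hd0, Submodule.span_zero_singleton]
        simp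
      · rw [finrank_span_singleton hd0]
    have hTle : Module.finrank ℂ ↥T ≤ 2 := by
      have := Submodule.finrank_add_le_finrank_add_finrank (leibIdeal br)
        (Submodule.span ℂ {d})
      rw [← hT] at this
      omega
    have := Submodule.finrank_mono hL1T
    omega
  have h2pos : Module.finrank ℂ ↥(lcs br 2) ≠ 0 := by
    intro h
    exact hne0 (Submodule.finrank_eq_zero.1 h)
  omega
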